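/- Let V be a finite-dimensional real vector space and let A, B, C be linear subspaces of V with A not contained in B. For subspaces X, Y of V write X ⊗ Y for the subspace of V ⊗ V spanned by {x ⊗ y | x ∈ X, y ∈ Y}. Suppose there exists a linear automorphism T of V ⊗ V such that T maps the subspace A ⊗ B onto B ⊗ B and maps the subspace A ⊗ C onto A ⊗ C. Then B ∩ C = {0}. -/

import Mathlib

open TensorProduct

/-- The subspace of `V ⊗ V` spanned by elementary tensors `x ⊗ y` with
`x ∈ X`, `y ∈ Y`. -/
def tensorSub {V : Type*} [AddCommGroup V] [Module ℝ V] (X Y : Submodule ℝ V) :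
    Submodule ℝ (TensorProduct ℝ V V) :=
  Submodule.span ℝ {z | ∃ x ∈ X, ∃ y ∈ Y, z = x ⊗ₜ[ℝ] y}

section Helpers

variable {V : Type*} [AddCommGroup V] [Module ℝ V] [FiniteDimensional ℝ V]

lemma tensorSub_mono {X X' Y Y' : Submodule ℝ V} (hX : X ≤ X') (hY : Y ≤ Y') :
    tensorSub X Y ≤ tensorSub X' Y' := by
  apply Submodule.span_mono
  rintro z ⟨x, hx, y, hy, rfl⟩
  exact ⟨x, hX hx, y, hY hy, rfl⟩

lemma tensorSub_eq_range (X Y : Submodule ℝ V) :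
    tensorSub X Y = LinearMap.range (TensorProduct.map X.subtype Y.subtype) := by
  have hset : {z | ∃ x ∈ X, ∃ y ∈ Y, z = x ⊗ₜ[ℝ] y} =
      {t : TensorProduct ℝ V V | ∃ m n, X.subtype m ⊗ₜ[ℝ] Y.subtype n = t} := by
    ext z
    constructor
    · rintro ⟨x, hx, y, hy, rfl⟩; exact ⟨⟨x, hx⟩, ⟨y, hy⟩, rfl⟩
    · rintro ⟨m, n, rfl⟩; exact ⟨m, m.2, n, n.2, rfl⟩
  rw [tensorSub, hset, TensorProduct.range_map_eq_span_tmul]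

lemma finrank_tensorSub (X Y : Submodule ℝ V) :
    Module.finrank ℝ (tensorSub X Y) = Module.finrank ℝ X * Module.finrank ℝ Y := by
  rw [tensorSub_eq_range]
  have hinj : Function.Injective (TensorProduct.map X.subtype Y.subtype) := by
    have h : TensorProduct.map X.subtype Y.subtype =
        (LinearMap.lTensor V Y.subtype) ∘ₗ (LinearMap.rTensor (↥Y) X.subtype) :=
      TensorProduct.ext' fun _ _ => rfl
    rw [h]
    exact (Module.Flat.lTensor_preserves_injective_linearMap _ Y.injective_subtype).comp
      (Module.Flat.rTensor_preserves_injective_linearMap _ X.injective_subtype)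
  rw [LinearMap.finrank_range_of_inj hinj, Module.finrank_tensorProduct]

set_option linter.unusedSectionVars false

lemma map_mem_tensorSub {X Y : Submodule ℝ V} {f g : V →ₗ[ℝ] V}
    (hf : ∀ v, f v ∈ X) (hg : ∀ v, g v ∈ Y) (z : TensorProduct ℝ V V) :
    TensorProduct.map f g z ∈ tensorSub X Y := by
  induction z using TensorProduct.induction_on with
  | zero => simp [Submodule.zero_mem]
  | tmul v w =>
      rw [TensorProduct.map_tmul]
      exact Submodule.subset_span ⟨f v, hf v, g w, hg w, rfl⟩
  | add a b ha hb => rw [map_add]; exact Submodule.add_mem _ ha hb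

lemma map_fixed_of_mem_tensorSub {X Y : Submodule ℝ V} {f g : V →ₗ[ℝ] V}
    (hf : ∀ x ∈ X, f x = x) (hg : ∀ y ∈ Y, g y = y) {z : TensorProduct ℝ V V}
    (hz : z ∈ tensorSub X Y) : TensorProduct.map f g z = z := by
  induction hz using Submodule.span_induction with
  | mem w hw =>
      obtain ⟨x, hx, y, hy, rfl⟩ := hw
      rw [TensorProduct.map_tmul, hf x hx, hg y hy]
  | zero => simp
  | add a b _ _ ha hb => rw [map_add, ha, hb]
  | smul c a _ ha => rw [map_smul, ha]

lemma exists_proj (X : Submodule ℝ V) :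
    ∃ p : V →ₗ[ℝ] V, (∀ v, p v ∈ X) ∧ ∀ x ∈ X, p x = x := by
  obtain ⟨q, hq⟩ := Submodule.exists_isCompl X
  refine ⟨X.subtype ∘ₗ (X.linearProjOfIsCompl q hq), fun v => (X.linearProjOfIsCompl q hq v).2,
    fun x hx => ?_⟩
  exact congrArg Subtype.val (Submodule.projectionOnto_apply_left hq ⟨x, hx⟩)

lemma tensorSub_sup_left (X X' : Submodule ℝ V) :
    tensorSub (X ⊔ X') ⊤ = tensorSub X ⊤ ⊔ tensorSub X' ⊤ := by
  apply le_antisymm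
  · rw [tensorSub, Submodule.span_le]
    rintro z ⟨x, hx, y, hy, rfl⟩
    obtain ⟨a, ha, b, hb, rfl⟩ := Submodule.mem_sup.1 hx
    rw [TensorProduct.add_tmul]
    exact Submodule.add_mem _
      (Submodule.mem_sup_left (Submodule.subset_span ⟨a, ha, y, hy, rfl⟩))
      (Submodule.mem_sup_right (Submodule.subset_span ⟨b, hb, y, hy, rfl⟩))
  · exact sup_le (tensorSub_mono le_sup_left le_rfl) (tensorSub_mono le_sup_right le_rfl)

lemma tensorSub_sup_right (Y Y' : Submodule ℝ V) :
    tensorSub ⊤ (Y ⊔ Y') = tensorSub ⊤ Y ⊔ tensorSub ⊤ Y' := by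
  apply le_antisymm
  · rw [tensorSub, Submodule.span_le]
    rintro z ⟨x, hx, y, hy, rfl⟩
    obtain ⟨a, ha, b, hb, rfl⟩ := Submodule.mem_sup.1 hy
    rw [TensorProduct.tmul_add]
    exact Submodule.add_mem _
      (Submodule.mem_sup_left (Submodule.subset_span ⟨x, hx, a, ha, rfl⟩))
      (Submodule.mem_sup_right (Submodule.subset_span ⟨x, hx, b, hb, rfl⟩))
  · exact sup_le (tensorSub_mono le_rfl le_sup_left) (tensorSub_mono le_rfl le_sup_right)

lemma tensorSub_inf_left (X X' : Submodule ℝ V) :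
    tensorSub X ⊤ ⊓ tensorSub X' ⊤ = tensorSub (X ⊓ X') ⊤ := by
  have hle : tensorSub (X ⊓ X') ⊤ ≤ tensorSub X ⊤ ⊓ tensorSub X' ⊤ :=
    le_inf (tensorSub_mono inf_le_left le_rfl) (tensorSub_mono inf_le_right le_rfl)
  refine (Submodule.eq_of_le_of_finrank_le hle ?_).symm
  have h1 : Module.finrank ℝ ↥(tensorSub X ⊤ ⊔ tensorSub X' ⊤)
      + Module.finrank ℝ ↥(tensorSub X ⊤ ⊓ tensorSub X' ⊤)
      = Module.finrank ℝ ↥(tensorSub X ⊤) + Module.finrank ℝ ↥(tensorSub X' ⊤) :=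
    Submodule.finrank_sup_add_finrank_inf_eq _ _
  rw [← tensorSub_sup_left, finrank_tensorSub, finrank_tensorSub, finrank_tensorSub] at h1
  have h2 : Module.finrank ℝ ↥(X ⊔ X') + Module.finrank ℝ ↥(X ⊓ X')
      = Module.finrank ℝ X + Module.finrank ℝ X' :=
    Submodule.finrank_sup_add_finrank_inf_eq _ _
  have h3 : (Module.finrank ℝ ↥(X ⊔ X') + Module.finrank ℝ ↥(X ⊓ X')) * Module.finrank ℝ (⊤ : Submodule ℝ V)
      = Module.finrank ℝ X * Module.finrank ℝ (⊤ : Submodule ℝ V)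
        + Module.finrank ℝ X' * Module.finrank ℝ (⊤ : Submodule ℝ V) := by
    rw [h2, add_mul]
  rw [add_mul] at h3
  rw [finrank_tensorSub]
  omega

lemma tensorSub_inf_right (Y Y' : Submodule ℝ V) :
    tensorSub ⊤ Y ⊓ tensorSub ⊤ Y' = tensorSub ⊤ (Y ⊓ Y') := by
  have hle : tensorSub ⊤ (Y ⊓ Y') ≤ tensorSub ⊤ Y ⊓ tensorSub ⊤ Y' :=
    le_inf (tensorSub_mono le_rfl inf_le_left) (tensorSub_mono le_rfl inf_le_right)
  refine (Submodule.eq_of_le_of_finrank_le hle ?_).symm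
  have h1 : Module.finrank ℝ ↥(tensorSub ⊤ Y ⊔ tensorSub ⊤ Y')
      + Module.finrank ℝ ↥(tensorSub ⊤ Y ⊓ tensorSub ⊤ Y')
      = Module.finrank ℝ ↥(tensorSub ⊤ Y) + Module.finrank ℝ ↥(tensorSub ⊤ Y') :=
    Submodule.finrank_sup_add_finrank_inf_eq _ _
  rw [← tensorSub_sup_right, finrank_tensorSub, finrank_tensorSub, finrank_tensorSub] at h1
  have h2 : Module.finrank ℝ ↥(Y ⊔ Y') + Module.finrank ℝ ↥(Y ⊓ Y')
      = Module.finrank ℝ Y + Module.finrank ℝ Y' :=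
    Submodule.finrank_sup_add_finrank_inf_eq _ _
  have h3 : Module.finrank ℝ (⊤ : Submodule ℝ V) * (Module.finrank ℝ ↥(Y ⊔ Y') + Module.finrank ℝ ↥(Y ⊓ Y'))
      = Module.finrank ℝ (⊤ : Submodule ℝ V) * Module.finrank ℝ Y
        + Module.finrank ℝ (⊤ : Submodule ℝ V) * Module.finrank ℝ Y' := by
    rw [h2, mul_add]
  rw [mul_add] at h3
  rw [finrank_tensorSub]
  omega

lemma tensorSub_inf_le (X X' Y Y' : Submodule ℝ V) :
    tensorSub X Y ⊓ tensorSub X' Y' ≤ tensorSub (X ⊓ X') (Y ⊓ Y') := by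
  intro z hz
  obtain ⟨hz1, hz2⟩ := hz
  have hX : z ∈ tensorSub (X ⊓ X') ⊤ := by
    rw [← tensorSub_inf_left]
    exact ⟨tensorSub_mono le_rfl le_top hz1, tensorSub_mono le_rfl le_top hz2⟩
  have hY : z ∈ tensorSub ⊤ (Y ⊓ Y') := by
    rw [← tensorSub_inf_right]
    exact ⟨tensorSub_mono le_top le_rfl hz1, tensorSub_mono le_top le_rfl hz2⟩
  obtain ⟨p, hp1, hp2⟩ := exists_proj (X ⊓ X')
  obtain ⟨q, hq1, hq2⟩ := exists_proj (Y ⊓ Y')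
  have e1 : TensorProduct.map p LinearMap.id z = z :=
    map_fixed_of_mem_tensorSub hp2 (fun y _ => rfl) hX
  have e2 : TensorProduct.map LinearMap.id q z = z :=
    map_fixed_of_mem_tensorSub (fun x _ => rfl) hq2 hY
  have e3 : TensorProduct.map p q z = z := by
    have : TensorProduct.map p q = (TensorProduct.map p LinearMap.id) ∘ₗ
        (TensorProduct.map LinearMap.id q) := TensorProduct.ext' fun _ _ => rfl
    rw [this, LinearMap.comp_apply, e2, e1]
  rw [← e3]
  exact map_mem_tensorSub hp1 hq1 z

end Helpers

/-- if `A` is not contained in `B` and some linear automorphism `T`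
of `V ⊗ V` maps `A ⊗ B` onto `B ⊗ B` and `A ⊗ C` onto `A ⊗ C`, then `B ∩ C = 0`. -/
theorem inf_eq_bot_of_tensor_automorphism {V : Type*} [AddCommGroup V] [Module ℝ V]
    [FiniteDimensional ℝ V]
    (A B C : Submodule ℝ V) (hAB : ¬ A ≤ B)
    (T : TensorProduct ℝ V V ≃ₗ[ℝ] TensorProduct ℝ V V)
    (hT₁ : Submodule.map (T : TensorProduct ℝ V V →ₗ[ℝ] TensorProduct ℝ V V)
      (tensorSub A B) = tensorSub B B)
    (hT₂ : Submodule.map (T : TensorProduct ℝ V V →ₗ[ℝ] TensorProduct ℝ V V)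
      (tensorSub A C) = tensorSub A C) :
    B ⊓ C = ⊥ := by
  set d := Module.finrank ℝ ↥(B ⊓ C) with hd
  have key : Submodule.map (T : TensorProduct ℝ V V →ₗ[ℝ] TensorProduct ℝ V V)
      (tensorSub A (B ⊓ C)) ≤ tensorSub (B ⊓ A) (B ⊓ C) := by
    have h1 : Submodule.map (T : TensorProduct ℝ V V →ₗ[ℝ] TensorProduct ℝ V V)
        (tensorSub A (B ⊓ C)) ≤ tensorSub B B := by
      rw [← hT₁]; exact Submodule.map_mono (tensorSub_mono le_rfl inf_le_left)
    have h2 : Submodule.map (T : TensorProduct ℝ V V →ₗ[ℝ] TensorProduct ℝ V V)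
        (tensorSub A (B ⊓ C)) ≤ tensorSub A C := by
      rw [← hT₂]; exact Submodule.map_mono (tensorSub_mono le_rfl inf_le_right)
    refine le_trans (le_inf h1 h2) (le_trans (tensorSub_inf_le B A B C) ?_)
    exact tensorSub_mono le_rfl le_rfl
  have hfr : Module.finrank ℝ ↥(Submodule.map
      (T : TensorProduct ℝ V V →ₗ[ℝ] TensorProduct ℝ V V) (tensorSub A (B ⊓ C)))
      = Module.finrank ℝ A * d := by
    rw [LinearEquiv.finrank_map_eq, finrank_tensorSub]
  have hle : Module.finrank ℝ A * d ≤ Module.finrank ℝ ↥(B ⊓ A) * d := by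
    rw [← hfr, ← finrank_tensorSub]
    exact Submodule.finrank_mono key
  by_contra hne
  have hdpos : 0 < d :=
    Nat.pos_of_ne_zero fun h0 => hne (Submodule.finrank_eq_zero.mp h0)
  have hlt : Module.finrank ℝ ↥(B ⊓ A) < Module.finrank ℝ A := by
    apply Submodule.finrank_lt_finrank_of_lt
    refine lt_of_le_of_ne inf_le_right fun h => hAB ?_
    rw [← h]; exact inf_le_left
  exact absurd hle (not_le.mpr ((Nat.mul_lt_mul_right hdpos).mpr hlt))
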